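/- Let f(z) = a_0 + a_1 z + ... + a_n z^n be a polynomial of degree n with all a_j nonzero, and let g be the forward rotation of f. If |f(z)| + |g(z)| > |a_n|·|z^{n+1} − 1| holds for all z on the unit circle, then N(g) = N(f) + 1, where N counts zeros in the open unit disk with multiplicity. -/

import Mathlib

open Polynomial

/-- Number of zeros of a polynomial in the open unit disk, counted with multiplicity. -/
noncomputable def diskZeros (h : Polynomial ℂ) : ℕ :=
  (h.roots.filter (fun z => ‖z‖ < 1)).card

open Metric Real Complex

lemma circleIntegral_add' {f g : ℂ → ℂ} {c : ℂ} {R : ℝ}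
    (hf : CircleIntegrable f c R) (hg : CircleIntegrable g c R) :
    (∮ z in C(c, R), (f z + g z)) = (∮ z in C(c, R), f z) + ∮ z in C(c, R), g z := by
  simp only [circleIntegral, smul_add, intervalIntegral.integral_add hf.out hg.out]

lemma integral_sub_inv_outside {w : ℂ} (hw : 1 < ‖w‖) :
    (∮ z in C((0:ℂ), 1), (z - w)⁻¹) = 0 := by
  apply Complex.circleIntegral_eq_zero_of_differentiable_on_off_countable zero_le_one
    Set.countable_empty
  · refine (continuousOn_id.sub continuousOn_const).inv₀ fun z hz => sub_ne_zero.2 fun h => ?_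
    rw [Metric.mem_closedBall, dist_zero_right] at hz
    rw [show z = w from h] at hz
    exact absurd hz (not_le.2 (by simpa using hw))
  · intro z hz
    exact ((differentiable_id.sub_const w) z).inv (sub_ne_zero.2 fun h => by
      rw [Set.mem_diff, Metric.mem_ball, dist_zero_right] at hz
      rw [show z = w from h] at hz
      exact absurd hz.1 (not_lt.2 (by simpa using hw.le)))

lemma argPrinciple : ∀ (N : ℕ) (h : ℂ[X]), h.natDegree = N → h ≠ 0 →
    (∀ z ∈ sphere (0:ℂ) 1, h.eval z ≠ 0) →
    (∮ z in C((0:ℂ), 1), h.derivative.eval z / h.eval z) = (2 * π * I) * (diskZeros h : ℂ) := by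
  intro N
  induction N with
  | zero =>
    intro h hdeg h0 _
    obtain ⟨c, rfl⟩ : ∃ c, h = C c := ⟨h.coeff 0, Polynomial.eq_C_of_natDegree_eq_zero hdeg⟩
    simp [diskZeros, circleIntegral]
  | succ N ih =>
    intro h hdeg h0 hsph
    obtain ⟨r, hr⟩ := Complex.exists_root (f := h) (by
      rw [Polynomial.degree_eq_natDegree h0, hdeg]; exact_mod_cast Nat.succ_pos N)
    obtain ⟨q, hq⟩ := (Polynomial.dvd_iff_isRoot.2 hr)
    have hq0 : q ≠ 0 := fun h' => h0 (by rw [hq, h', mul_zero])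
    have hXr : (X - C r : ℂ[X]) ≠ 0 := Polynomial.X_sub_C_ne_zero r
    have hrabs : ‖r‖ ≠ 1 := by
      intro h1
      exact hsph r (mem_sphere_zero_iff_norm.2 h1) hr
    have hqdeg : q.natDegree = N := by
      have := Polynomial.natDegree_mul hXr hq0
      rw [← hq, hdeg, Polynomial.natDegree_X_sub_C] at this
      omega
    have hqsph : ∀ z ∈ sphere (0:ℂ) 1, q.eval z ≠ 0 := by
      intro z hz hz0
      exact hsph z hz (by rw [hq]; simp [hz0])
    have hzr : ∀ z ∈ sphere (0:ℂ) 1, z - r ≠ 0 := by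
      intro z hz
      rw [mem_sphere_zero_iff_norm] at hz
      exact sub_ne_zero.2 fun h' => hrabs (by rw [← h']; exact hz)
    -- integrand equality on the sphere
    have hco : Set.EqOn (fun z => h.derivative.eval z / h.eval z)
        (fun z => (z - r)⁻¹ + q.derivative.eval z / q.eval z) (sphere (0:ℂ) 1) := by
      intro z hz
      have h1 := hzr z hz
      have h2 := hqsph z hz
      simp only [hq, Polynomial.derivative_mul, Polynomial.derivative_sub,
        Polynomial.derivative_X, Polynomial.derivative_C, sub_zero, one_mul,
        Polynomial.eval_add, Polynomial.eval_mul, Polynomial.eval_sub, Polynomial.eval_X,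
        Polynomial.eval_C]
      field_simp
    rw [circleIntegral.integral_congr zero_le_one hco]
    have hint1 : CircleIntegrable (fun z => (z - r)⁻¹) 0 1 := by
      apply ContinuousOn.circleIntegrable zero_le_one
      exact (continuousOn_id.sub continuousOn_const).inv₀ hzr
    have hint2 : CircleIntegrable (fun z => q.derivative.eval z / q.eval z) 0 1 := by
      apply ContinuousOn.circleIntegrable zero_le_one
      exact (q.derivative.continuousOn_aeval.div q.continuousOn_aeval hqsph)
    rw [circleIntegral_add' hint1 hint2, ih q hqdeg hq0 hqsph]
    have hroots : h.roots = r ::ₘ q.roots := by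
      rw [hq, Polynomial.roots_mul (hq ▸ h0), Polynomial.roots_X_sub_C]
      rfl
    have hdz : (diskZeros h : ℂ) = (if ‖r‖ < 1 then 1 else 0) + (diskZeros q : ℂ) := by
      rw [diskZeros, hroots, Multiset.filter_cons]
      by_cases hlt : ‖r‖ < 1 <;> simp [hlt, diskZeros, add_comm]
    rw [hdz]
    by_cases hlt : ‖r‖ < 1
    · rw [circleIntegral.integral_sub_inv_of_mem_ball (by simpa using hlt)]
      simp [hlt]; ring
    · rw [integral_sub_inv_outside (lt_of_le_of_ne (not_lt.1 hlt) (Ne.symm hrabs))]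
      simp [hlt]

theorem stmt_3 (f : Polynomial ℂ) (n : ℕ) (hdeg : f.natDegree = n)
    (hcoeff : ∀ j ≤ n, f.coeff j ≠ 0)
    (hbig : ∀ z : ℂ, ‖z‖ = 1 →
      ‖f.coeff n‖ * ‖z ^ (n + 1) - 1‖ <
        ‖f.eval z‖ +
          ‖(C (f.coeff n) + ∑ j ∈ Finset.range n,
            C (f.coeff j) * X ^ (j + 1)).eval z‖) :
    diskZeros (C (f.coeff n) + ∑ j ∈ Finset.range n, C (f.coeff j) * X ^ (j + 1)) =
      diskZeros f + 1 := by
  have han : f.coeff n ≠ 0 := hcoeff n le_rfl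
  have hf0 : f ≠ 0 := fun h => han (by simp [h])
  set g : ℂ[X] := C (f.coeff n) + ∑ j ∈ Finset.range n, C (f.coeff j) * X ^ (j + 1) with hgdef
  -- evaluation of g
  have hgev : ∀ z : ℂ, g.eval z = f.coeff n + ∑ j ∈ Finset.range n, f.coeff j * z ^ (j + 1) := by
    intro z; simp [hgdef, Polynomial.eval_finset_sum]
  -- key pointwise identity : z f(z) - g(z) = a_n (z^{n+1} - 1)
  have hkey : ∀ z : ℂ, z * f.eval z - g.eval z = f.coeff n * (z ^ (n + 1) - 1) := by
    intro z
    rw [hgev, Polynomial.eval_eq_sum_range, hdeg, Finset.mul_sum,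
      Finset.sum_congr rfl (fun j _ => show z * (f.coeff j * z ^ j) = f.coeff j * z ^ (j+1) by ring),
      Finset.sum_range_succ]
    ring
  -- no zeros on the circle for the homotopy
  have hnz : ∀ t : ℝ, 0 ≤ t → t ≤ 1 → ∀ z ∈ Metric.sphere (0:ℂ) 1,
      (t : ℂ) * (z * f.eval z) + (1 - t) * g.eval z ≠ 0 := by
    intro t ht0 ht1 z hz h0
    rw [mem_sphere_zero_iff_norm] at hz
    have habs : ‖z‖ = 1 := hz
    have hlt := hbig z habs
    have e1 : ((1:ℂ) - t) * (z * f.eval z - g.eval z) = z * f.eval z := by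
      linear_combination -h0
    have e2 : (t : ℂ) * (z * f.eval z - g.eval z) = -(g.eval z) := by
      linear_combination h0
    have a1 : (1 - t) * ‖z * f.eval z - g.eval z‖ = ‖f.eval z‖ := by
      have := congrArg norm e1
      rwa [norm_mul, norm_mul, show ((1:ℂ) - t) = ((1 - t : ℝ) : ℂ) by push_cast; ring,
        Complex.norm_real, Real.norm_eq_abs, _root_.abs_of_nonneg (by linarith : (0:ℝ) ≤ 1 - t), habs, one_mul] at this
    have a2 : t * ‖z * f.eval z - g.eval z‖ = ‖g.eval z‖ := by
      have := congrArg norm e2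
      rwa [norm_mul, norm_neg, Complex.norm_real, Real.norm_eq_abs, _root_.abs_of_nonneg ht0] at this
    have h2 : ‖z * f.eval z - g.eval z‖
        = ‖f.eval z‖ + ‖g.eval z‖ := by
      rw [← a1, ← a2]; ring
    rw [hkey z, norm_mul] at h2
    exact absurd h2 hlt.ne
  -- the homotopy of polynomials
  set σ : ℝ → ℝ := fun t => max 0 (min 1 t) with hσdef
  have hσ0 : ∀ t, 0 ≤ σ t := fun t => le_max_left _ _
  have hσ1 : ∀ t, σ t ≤ 1 := fun t => max_le zero_le_one (min_le_left _ _)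
  have hσc : Continuous σ := continuous_const.max (continuous_const.min continuous_id)
  set p : ℝ → ℂ[X] := fun t => C ((σ t : ℝ) : ℂ) * (X * f) + C ((1 - σ t : ℝ) : ℂ) * g with hpdef
  have hpev : ∀ t z, (p t).eval z
      = (σ t : ℂ) * (z * f.eval z) + (1 - (σ t : ℂ)) * g.eval z := by
    intro t z; simp [hpdef]
  have hpdev : ∀ t z, (p t).derivative.eval z
      = (σ t : ℂ) * ((X * f : ℂ[X]).derivative.eval z)
        + (1 - (σ t : ℂ)) * (g.derivative.eval z) := by
    intro t z
    simp [hpdef, Polynomial.derivative_add, Polynomial.derivative_C_mul]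
  have hps : ∀ t, ∀ z ∈ Metric.sphere (0:ℂ) 1, (p t).eval z ≠ 0 := by
    intro t z hz
    rw [hpev]
    exact hnz (σ t) (hσ0 t) (hσ1 t) z hz
  have hp0 : ∀ t, p t ≠ 0 := by
    intro t h
    exact hps t 1 (by simp) (by rw [h]; simp)
  have hF : ∀ t : ℝ, (∮ z in C((0:ℂ), 1), (p t).derivative.eval z / (p t).eval z)
      = (2 * π * I) * (diskZeros (p t) : ℂ) :=
    fun t => argPrinciple ((p t).natDegree) (p t) rfl (hp0 t) (hps t)
  -- parametric integrand
  set G : ℝ → ℝ → ℂ := fun t θ =>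
    (circleMap 0 1 θ * I) *
      (((σ t : ℂ) * ((X * f : ℂ[X]).derivative.eval (circleMap 0 1 θ))
          + (1 - (σ t : ℂ)) * (g.derivative.eval (circleMap 0 1 θ))) /
        ((σ t : ℂ) * (circleMap 0 1 θ * f.eval (circleMap 0 1 θ))
          + (1 - (σ t : ℂ)) * g.eval (circleMap 0 1 θ))) with hGdef
  have hFeq : ∀ t, (∮ z in C((0:ℂ), 1), (p t).derivative.eval z / (p t).eval z)
      = ∫ θ in (0:ℝ)..(2 * π), G t θ := by
    intro t
    rw [circleIntegral]
    congr 1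
    funext θ
    rw [deriv_circleMap, smul_eq_mul, hpev, hpdev, hGdef]
  have hGc : Continuous (Function.uncurry G) := by
    have hcm : Continuous fun q : ℝ × ℝ => circleMap 0 1 q.2 :=
      (continuous_circleMap 0 1).comp continuous_snd
    have hσ' : Continuous fun q : ℝ × ℝ => ((σ q.1 : ℝ) : ℂ) :=
      Complex.continuous_ofReal.comp (hσc.comp continuous_fst)
    apply Continuous.mul (hcm.mul continuous_const)
    apply Continuous.div
    · exact (hσ'.mul ((X * f : ℂ[X]).derivative.continuous.comp hcm)).add
        (((continuous_const.sub hσ')).mul (g.derivative.continuous.comp hcm))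
    · exact (hσ'.mul (hcm.mul (f.continuous.comp hcm))).add
        (((continuous_const.sub hσ')).mul (g.continuous.comp hcm))
    · intro q
      have := hps q.1 (circleMap 0 1 q.2) (circleMap_mem_sphere 0 zero_le_one q.2)
      rw [hpev] at this
      exact this
  have hFc : Continuous fun t => ∫ θ in (0:ℝ)..(2 * π), G t θ :=
    intervalIntegral.continuous_parametric_intervalIntegral_of_continuous' hGc 0 (2 * π)
  have hπ : (2 * π * I : ℂ) ≠ 0 := by
    simp [Real.pi_ne_zero, Complex.I_ne_zero]
  set φ : ℝ → ℝ := fun t => ((∫ θ in (0:ℝ)..(2 * π), G t θ) / (2 * π * I)).re with hφdef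
  have hφ : ∀ t, φ t = (diskZeros (p t) : ℝ) := by
    intro t
    rw [hφdef]
    simp only [← hFeq, hF, mul_div_cancel_left₀ _ hπ, Complex.natCast_re]
  have hφc : Continuous φ := Complex.continuous_re.comp (hFc.div_const _)
  have hσz : σ 0 = 0 := by rw [hσdef]; norm_num
  have hσo : σ 1 = 1 := by rw [hσdef]; norm_num
  have hp0g : p 0 = g := by rw [hpdef]; simp [hσz]
  have hp1f : p 1 = X * f := by rw [hpdef]; simp [hσo]
  have hXf : diskZeros (X * f) = diskZeros f + 1 := by
    rw [diskZeros, Polynomial.roots_mul (mul_ne_zero Polynomial.X_ne_zero hf0),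
      Polynomial.roots_X, Multiset.filter_add]
    rw [Multiset.filter_singleton]
    simp [diskZeros, add_comm]
  have hφ0 : φ 0 = (diskZeros g : ℝ) := by rw [hφ 0, hp0g]
  have hφ1 : φ 1 = ((diskZeros f + 1 : ℕ) : ℝ) := by rw [hφ 1, hp1f, hXf]
  -- integer-valued IVT
  by_contra hne
  have hval : ∀ t, ∃ k : ℕ, φ t = (k : ℝ) := fun t => ⟨diskZeros (p t), hφ t⟩
  rcases Nat.lt_or_ge (diskZeros g) (diskZeros f + 1) with hlt | hge
  · have hc : ((diskZeros g : ℝ) + 1/2) ∈ Set.Icc (φ 0) (φ 1) := by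
      rw [hφ0, hφ1]
      constructor
      · linarith
      · have : (diskZeros g : ℝ) + 1 ≤ ((diskZeros f + 1 : ℕ) : ℝ) := by exact_mod_cast hlt
        linarith
    obtain ⟨t, _, htv⟩ := intermediate_value_Icc zero_le_one hφc.continuousOn hc
    obtain ⟨k, hk⟩ := hval t
    rw [hk] at htv
    have : (2 * k : ℝ) = 2 * (diskZeros g) + 1 := by linarith
    have : 2 * k = 2 * diskZeros g + 1 := by exact_mod_cast this
    omega
  · have hlt' : diskZeros f + 1 < diskZeros g := lt_of_le_of_ne hge (fun h => hne h.symm)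
    have hc : (((diskZeros f + 1 : ℕ) : ℝ) + 1/2) ∈ Set.Icc (φ 1) (φ 0) := by
      rw [hφ0, hφ1]
      constructor
      · linarith
      · have : ((diskZeros f + 1 : ℕ) : ℝ) + 1 ≤ (diskZeros g : ℝ) := by exact_mod_cast hlt'
        linarith
    obtain ⟨t, _, htv⟩ := intermediate_value_Icc' zero_le_one hφc.continuousOn hc
    obtain ⟨k, hk⟩ := hval t
    rw [hk] at htv
    have : (2 * k : ℝ) = 2 * ((diskZeros f + 1 : ℕ) : ℝ) + 1 := by linarith
    have : 2 * k = 2 * (diskZeros f + 1) + 1 := by exact_mod_cast this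
    omega
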